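/- Let (Ω, S, P) be a finitely additive probability content space. For every sequence (A_n)_{n∈ℕ} of sets in S, every function N : (ℕ → ℕ) → ℕ, and all u, v ∈ ℕ with v > u, there exists i ∈ ℕ such that: if P(⋂_{l=0}^{N(g)} ⋃_{j=l}^{g(l)} A_j) ≤ 2^{-v} holds for every g : ℕ → ℕ (where the intersection/union is taken only over indices where it makes sense, interpreting ⋃_{j=l}^{g(l)} A_j as empty if g(l) < l), then P(A_i) < 2^{-u}. -/

import Mathlib

open Set

theorem avigad_dean_rute_combinatorial {Ω : Type*} [Nonempty Ω]
    (S : Set (Set Ω)) (P : Set Ω → ℝ)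
    (hempty : ∅ ∈ S) (hcompl : ∀ A ∈ S, Aᶜ ∈ S)
    (hunion : ∀ A ∈ S, ∀ B ∈ S, A ∪ B ∈ S)
    (hnonneg : ∀ A ∈ S, 0 ≤ P A) (hle1 : ∀ A ∈ S, P A ≤ 1)
    (huniv : P Set.univ = 1)
    (hadd : ∀ A ∈ S, ∀ B ∈ S, Disjoint A B → P (A ∪ B) = P A + P B)
    (A : ℕ → Set Ω) (hAS : ∀ n, A n ∈ S)
    (N : (ℕ → ℕ) → ℕ) (u v : ℕ) (huv : u < v) :
    ∃ i : ℕ,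
      (∀ g : ℕ → ℕ,
          P (⋂ l ∈ Finset.range (N g + 1), ⋃ j ∈ Finset.Icc l (g l), A j) ≤ (1 / 2 : ℝ) ^ v) →
        P (A i) < (1 / 2 : ℝ) ^ u := by
  by_contra hcon
  push_neg at hcon
  have hH : ∀ g : ℕ → ℕ,
      P (⋂ l ∈ Finset.range (N g + 1), ⋃ j ∈ Finset.Icc l (g l), A j) ≤ (1 / 2 : ℝ) ^ v :=
    (hcon 0).1
  have hlow : ∀ i, (1 / 2 : ℝ) ^ u ≤ P (A i) := fun i => (hcon i).2
  -- basic closure properties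
  have huniv_mem : (Set.univ : Set Ω) ∈ S := by simpa using hcompl ∅ hempty
  have hinter : ∀ B ∈ S, ∀ C ∈ S, B ∩ C ∈ S := by
    intro B hB C hC
    have h := hcompl _ (hunion _ (hcompl _ hB) _ (hcompl _ hC))
    simpa [Set.compl_union, compl_compl] using h
  have hdiff : ∀ B ∈ S, ∀ C ∈ S, B \ C ∈ S := by
    intro B hB C hC
    simpa [Set.diff_eq] using hinter B hB Cᶜ (hcompl C hC)
  have hmono : ∀ B ∈ S, ∀ C ∈ S, B ⊆ C → P B ≤ P C := by
    intro B hB C hC hBC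
    have heq : B ∪ (C \ B) = C := Set.union_diff_cancel hBC
    have h := hadd B hB (C \ B) (hdiff C hC B hB) disjoint_sdiff_right
    have h0 := hnonneg (C \ B) (hdiff C hC B hB)
    rw [heq] at h
    linarith
  have hsplit : ∀ B ∈ S, ∀ C ∈ S, P B = P (B ∩ C) + P (B \ C) := by
    intro B hB C hC
    have heq : (B ∩ C) ∪ (B \ C) = B := Set.inter_union_diff B C
    have hd : Disjoint (B ∩ C) (B \ C) :=
      Disjoint.mono_left Set.inter_subset_right disjoint_sdiff_right
    have h := hadd (B ∩ C) (hinter B hB C hC) (B \ C) (hdiff B hB C hC) hd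
    rw [heq] at h
    linarith
  have hPempty : P ∅ = 0 := by
    have h := hadd ∅ hempty ∅ hempty (by simp)
    simp at h
    linarith
  have hunionle : ∀ B ∈ S, ∀ C ∈ S, P (B ∪ C) ≤ P B + P C := by
    intro B hB C hC
    have heq : B ∪ (C \ B) = B ∪ C := by
      rw [Set.union_diff_self]
    have h := hadd B hB (C \ B) (hdiff C hC B hB) disjoint_sdiff_right
    rw [heq] at h
    have h2 : P (C \ B) ≤ P C := hmono _ (hdiff C hC B hB) _ hC Set.diff_subset
    linarith
  have hUS : ∀ (s : Finset ℕ) (f : ℕ → Set Ω), (∀ i, f i ∈ S) → (⋃ j ∈ s, f j) ∈ S := by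
    intro s f hf
    induction s using Finset.induction with
    | empty => simpa using hempty
    | insert _ _ h ih =>
      rw [Finset.set_biUnion_insert]
      exact hunion _ (hf _) _ ih
  have hIS : ∀ (s : Finset ℕ) (f : ℕ → Set Ω), (∀ i, f i ∈ S) → (⋂ j ∈ s, f j) ∈ S := by
    intro s f hf
    induction s using Finset.induction with
    | empty => simpa using huniv_mem
    | insert _ _ h ih =>
      rw [Finset.set_biInter_insert]
      exact hinter _ (hf _) _ ih
  have hsubadd : ∀ (n : ℕ) (f : ℕ → Set Ω), (∀ i, f i ∈ S) →
      P (⋃ i ∈ Finset.range n, f i) ≤ ∑ i ∈ Finset.range n, P (f i) := by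
    intro n f hf
    induction n with
    | zero => simp [hPempty]
    | succ n ih =>
      rw [Finset.range_add_one, Finset.set_biUnion_insert, Finset.sum_insert (by simp)]
      have h1 := hunionle (f n) (hf n) (⋃ i ∈ Finset.range n, f i) (hUS _ _ hf)
      linarith
  -- main argument
  set ε : ℝ := (1 / 2 : ℝ) ^ u with hεdef
  have hεpos : 0 < ε := by positivity
  have hUmem : ∀ l m : ℕ, (⋃ j ∈ Finset.Icc l m, A j) ∈ S := fun l m => hUS _ _ hAS
  have hUsub : ∀ l m m' : ℕ, m ≤ m' →
      (⋃ j ∈ Finset.Icc l m, A j) ⊆ ⋃ j ∈ Finset.Icc l m', A j := by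
    intro l m m' h
    refine Set.iUnion₂_subset fun j hj x hx => ?_
    exact Set.mem_biUnion (Finset.Icc_subset_Icc_right h hj) hx
  have hbdd : ∀ l : ℕ, BddAbove (Set.range fun m => P (⋃ j ∈ Finset.Icc l m, A j)) := by
    intro l
    refine ⟨1, ?_⟩
    rintro x ⟨m, rfl⟩
    exact hle1 _ (hUmem l m)
  have hchoice : ∀ l : ℕ, ∃ m, l ≤ m ∧
      sSup (Set.range fun m => P (⋃ j ∈ Finset.Icc l m, A j)) - ε * (1 / 2) ^ (l + 2)
        < P (⋃ j ∈ Finset.Icc l m, A j) := by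
    intro l
    have hne : (Set.range fun m => P (⋃ j ∈ Finset.Icc l m, A j)).Nonempty :=
      ⟨P (⋃ j ∈ Finset.Icc l l, A j), ⟨l, rfl⟩⟩
    have hlt : sSup (Set.range fun m => P (⋃ j ∈ Finset.Icc l m, A j)) - ε * (1 / 2) ^ (l + 2)
        < sSup (Set.range fun m => P (⋃ j ∈ Finset.Icc l m, A j)) :=
      sub_lt_self _ (by positivity)
    obtain ⟨x, hx, hxlt⟩ := exists_lt_of_lt_csSup hne hlt
    obtain ⟨m, rfl⟩ := hx
    refine ⟨max l m, le_max_left _ _, lt_of_lt_of_le hxlt ?_⟩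
    exact hmono _ (hUmem l m) _ (hUmem l (max l m)) (hUsub l m _ (le_max_right _ _))
  choose g hgl hgP using hchoice
  set L := N g with hLdef
  set X : Set Ω := ⋂ l ∈ Finset.range (L + 1), ⋃ j ∈ Finset.Icc l (g l), A j with hXdef
  have hkey : P X ≤ (1 / 2 : ℝ) ^ v := hH g
  have hXS : X ∈ S := hIS _ _ fun l => hUmem l (g l)
  have hsmall : ∀ l ∈ Finset.range (L + 1),
      P (A L \ ⋃ j ∈ Finset.Icc l (g l), A j) ≤ ε * (1 / 2) ^ (l + 2) := by
    intro l hl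
    have hlL : l ≤ L := Nat.lt_succ_iff.mp (Finset.mem_range.mp hl)
    set m' := max L (g l) with hm'
    have hAsub : A L ⊆ ⋃ j ∈ Finset.Icc l m', A j := fun x hx =>
      Set.mem_biUnion (Finset.mem_Icc.mpr ⟨hlL, le_max_left _ _⟩) hx
    have hsub : (⋃ j ∈ Finset.Icc l (g l), A j) ⊆ ⋃ j ∈ Finset.Icc l m', A j :=
      hUsub l _ _ (le_max_right _ _)
    have h1 : P (⋃ j ∈ Finset.Icc l m', A j)
        ≤ sSup (Set.range fun m => P (⋃ j ∈ Finset.Icc l m, A j)) :=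
      le_csSup (hbdd l) ⟨m', rfl⟩
    have h2 := hsplit _ (hUmem l m') _ (hUmem l (g l))
    rw [Set.inter_eq_self_of_subset_right hsub] at h2
    have hdsub : A L \ (⋃ j ∈ Finset.Icc l (g l), A j)
        ⊆ (⋃ j ∈ Finset.Icc l m', A j) \ (⋃ j ∈ Finset.Icc l (g l), A j) :=
      Set.diff_subset_diff_left hAsub
    have h4 : P (A L \ ⋃ j ∈ Finset.Icc l (g l), A j)
        ≤ P ((⋃ j ∈ Finset.Icc l m', A j) \ ⋃ j ∈ Finset.Icc l (g l), A j) :=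
      hmono _ (hdiff _ (hAS L) _ (hUmem l (g l)))
        _ (hdiff _ (hUmem l m') _ (hUmem l (g l))) hdsub
    have h5 := hgP l
    linarith
  have hdiffeq : A L \ X
      = ⋃ l ∈ Finset.range (L + 1), (A L \ ⋃ j ∈ Finset.Icc l (g l), A j) := by
    rw [hXdef]
    ext x
    simp only [Set.mem_diff, Set.mem_iInter, Set.mem_iUnion, not_forall, exists_prop]
    tauto
  have hsum1 : ∀ n : ℕ, ∑ l ∈ Finset.range n, ((1 / 2 : ℝ)) ^ (l + 2)
      = 1 / 2 - (1 / 2) ^ (n + 1) := by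
    intro n
    induction n with
    | zero => norm_num
    | succ n ih =>
      rw [Finset.sum_range_succ, ih]
      ring
  have hsumlt : ∑ l ∈ Finset.range (L + 1), (ε * (1 / 2 : ℝ) ^ (l + 2)) < ε / 2 := by
    rw [← Finset.mul_sum, hsum1]
    have hp : (0:ℝ) < (1 / 2 : ℝ) ^ (L + 1 + 1) := by positivity
    nlinarith
  have hPdiff : P (A L \ X) < ε / 2 := by
    rw [hdiffeq]
    calc P (⋃ l ∈ Finset.range (L + 1), (A L \ ⋃ j ∈ Finset.Icc l (g l), A j))
        ≤ ∑ l ∈ Finset.range (L + 1), P (A L \ ⋃ j ∈ Finset.Icc l (g l), A j) :=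
          hsubadd _ _ fun l => hdiff _ (hAS L) _ (hUmem l (g l))
      _ ≤ ∑ l ∈ Finset.range (L + 1), (ε * (1 / 2 : ℝ) ^ (l + 2)) :=
          Finset.sum_le_sum hsmall
      _ < ε / 2 := hsumlt
  have hstep := hsplit (A L) (hAS L) X hXS
  have hPX : P (A L ∩ X) ≤ P X :=
    hmono _ (hinter _ (hAS L) _ hXS) _ hXS Set.inter_subset_right
  have hv : (1 / 2 : ℝ) ^ v ≤ ε / 2 := by
    have h1 : (1 / 2 : ℝ) ^ v ≤ (1 / 2 : ℝ) ^ (u + 1) :=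
      pow_le_pow_of_le_one (by norm_num) (by norm_num) huv
    rw [hεdef]
    rw [pow_succ] at h1
    linarith
  have hA : ε ≤ P (A L) := hlow L
  linarith
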